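/- A prime p ≠ 3, 5 is represented by the form x² + xy + 4y² if and only if p ≡ 1 or 4 mod 15. -/

import Mathlib

private lemma sqrt_mul_self_lt {p : ℕ} (hp : p.Prime) : Nat.sqrt p * Nat.sqrt p < p := by
  rcases lt_or_eq_of_le (Nat.sqrt_le p) with h | h
  · exact h
  · exfalso
    rcases (hp.eq_one_or_self_of_dvd (Nat.sqrt p) ⟨Nat.sqrt p, h.symm⟩) with h1 | h1
    · rw [h1] at h; simp at h; have := hp.two_le; omega
    · rw [h1] at h; nlinarith [hp.two_le]

private lemma thue_lemma (p : ℕ) (hp : p.Prime) (r : ZMod p) :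
    ∃ x y : ℤ, ¬(x = 0 ∧ y = 0) ∧ x ^ 2 < (p : ℤ) ∧ y ^ 2 < (p : ℤ) ∧
      (x : ZMod p) = r * (y : ZMod p) := by
  haveI : Fact p.Prime := ⟨hp⟩
  set n := Nat.sqrt p with hn
  have hcard : Fintype.card (ZMod p) < Fintype.card (Fin (n + 1) × Fin (n + 1)) := by
    rw [ZMod.card, Fintype.card_prod, Fintype.card_fin]
    exact Nat.lt_succ_sqrt p
  obtain ⟨a, b, hab, hf⟩ := Fintype.exists_ne_map_eq_of_card_lt
    (fun q : Fin (n + 1) × Fin (n + 1) =>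
      ((q.1 : ℕ) : ZMod p) - r * ((q.2 : ℕ) : ZMod p)) hcard
  refine ⟨((a.1 : ℕ) : ℤ) - ((b.1 : ℕ) : ℤ), ((a.2 : ℕ) : ℤ) - ((b.2 : ℕ) : ℤ), ?_, ?_, ?_, ?_⟩
  · rintro ⟨h1, h2⟩
    apply hab
    have e1 : (a.1 : ℕ) = (b.1 : ℕ) := by omega
    have e2 : (a.2 : ℕ) = (b.2 : ℕ) := by omega
    exact Prod.ext (Fin.ext e1) (Fin.ext e2)
  · have h1 : ((a.1 : ℕ) : ℤ) ≤ n := by exact_mod_cast Nat.lt_succ_iff.mp a.1.isLt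
    have h2 : ((b.1 : ℕ) : ℤ) ≤ n := by exact_mod_cast Nat.lt_succ_iff.mp b.1.isLt
    have h3 : (0 : ℤ) ≤ (a.1 : ℕ) := Int.natCast_nonneg _
    have h4 : (0 : ℤ) ≤ (b.1 : ℕ) := Int.natCast_nonneg _
    have h5 : (n : ℤ) * n < p := by exact_mod_cast sqrt_mul_self_lt hp
    nlinarith
  · have h1 : ((a.2 : ℕ) : ℤ) ≤ n := by exact_mod_cast Nat.lt_succ_iff.mp a.2.isLt
    have h2 : ((b.2 : ℕ) : ℤ) ≤ n := by exact_mod_cast Nat.lt_succ_iff.mp b.2.isLt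
    have h3 : (0 : ℤ) ≤ (a.2 : ℕ) := Int.natCast_nonneg _
    have h4 : (0 : ℤ) ≤ (b.2 : ℕ) := Int.natCast_nonneg _
    have h5 : (n : ℤ) * n < p := by exact_mod_cast sqrt_mul_self_lt hp
    nlinarith
  · push_cast
    linear_combination hf

private lemma zmod4_sum (u v : ZMod 4) (hu : u ^ 2 = 1) (hv : v ^ 2 = 1)
    (h : u ^ 2 + u * v + 4 * v ^ 2 = 0) : u + v = 0 := by revert u v; decide

private lemma odd_sq_zmod4 {x : ℤ} (hx : Odd x) : ((x : ZMod 4)) ^ 2 = 1 := by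
  obtain ⟨m, rfl⟩ := hx
  push_cast
  have h40 : (4 : ZMod 4) = 0 := by decide
  linear_combination ((m : ZMod 4) ^ 2 + m) * h40

private lemma rep_of_root (p : ℕ) (hp : p.Prime) (h15 : p % 15 = 1 ∨ p % 15 = 4)
    (r : ZMod p) (hr : r ^ 2 + r + 4 = 0) :
    ∃ a b : ℤ, a ^ 2 + a * b + 4 * b ^ 2 = (p : ℤ) := by
  obtain ⟨x, y, hne, hx2, hy2, hxy⟩ := thue_lemma p hp r
  have hp0 : (0 : ℤ) < p := by exact_mod_cast hp.pos
  -- p divides Q(x,y)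
  have hdvd : (p : ℤ) ∣ x ^ 2 + x * y + 4 * y ^ 2 := by
    rw [← ZMod.intCast_zmod_eq_zero_iff_dvd]
    push_cast
    rw [hxy]
    linear_combination ((y : ZMod p)) ^ 2 * hr
  obtain ⟨k, hk⟩ := hdvd
  -- positivity
  have hpos : 0 < x ^ 2 + x * y + 4 * y ^ 2 := by
    rcases eq_or_ne y 0 with hy | hy
    · subst hy
      have hx0 : x ≠ 0 := fun h => hne ⟨h, rfl⟩
      have : 0 < x ^ 2 := by positivity
      nlinarith
    · have h1 : 1 ≤ y ^ 2 := by
        rcases lt_or_gt_of_ne hy with h | h <;> nlinarith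
      nlinarith [sq_nonneg (2 * x + y)]
  -- upper bound
  have hub : x ^ 2 + x * y + 4 * y ^ 2 < 6 * p := by
    nlinarith [sq_nonneg (x + y), sq_nonneg (x - y)]
  have hk1 : 1 ≤ k := by nlinarith
  have hk5 : k ≤ 5 := by nlinarith
  -- the value of p in ZMod 15
  have hP : ((p : ℕ) : ZMod 15) = 1 ∨ ((p : ℕ) : ZMod 15) = 4 := by
    rcases h15 with h | h
    · left; rw [← ZMod.natCast_mod, h]; rfl
    · right; rw [← ZMod.natCast_mod, h]; rfl
  have h150 : (15 : ZMod 15) = 0 := by decide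
  interval_cases k
  · exact ⟨x, y, by linarith⟩
  · -- k = 2 : impossible mod 15
    exfalso
    have key : ((2 * x + y : ℤ) : ZMod 15) ^ 2 = 8 * ((p : ℕ) : ZMod 15) := by
      have hc := congrArg (fun t : ℤ => (t : ZMod 15)) hk
      push_cast at hc ⊢
      linear_combination 4 * hc - ((y : ZMod 15)) ^ 2 * h150
    rcases hP with h | h <;> rw [h] at key
    · exact (by decide : ∀ s : ZMod 15, s ^ 2 ≠ 8 * 1) _ key
    · exact (by decide : ∀ s : ZMod 15, s ^ 2 ≠ 8 * 4) _ key
  · -- k = 3 : impossible mod 15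
    exfalso
    have key : ((2 * x + y : ℤ) : ZMod 15) ^ 2 = 12 * ((p : ℕ) : ZMod 15) := by
      have hc := congrArg (fun t : ℤ => (t : ZMod 15)) hk
      push_cast at hc ⊢
      linear_combination 4 * hc - ((y : ZMod 15)) ^ 2 * h150
    rcases hP with h | h <;> rw [h] at key
    · exact (by decide : ∀ s : ZMod 15, s ^ 2 ≠ 12 * 1) _ key
    · exact (by decide : ∀ s : ZMod 15, s ^ 2 ≠ 12 * 4) _ key
  · -- k = 4 : descent
    rcases Int.even_or_odd x with hxe | hxo
    · obtain ⟨u, rfl⟩ := hxe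
      rcases Int.even_or_odd y with hye | hyo
      · obtain ⟨v, rfl⟩ := hye
        refine ⟨u, v, ?_⟩
        have h4 : 4 * (u ^ 2 + u * v + 4 * v ^ 2) = 4 * (p : ℤ) := by linear_combination hk
        linarith
      · -- x = 2u, y odd : u must be even
        have h2 : 2 * u ^ 2 + u * y + 2 * y ^ 2 = 2 * (p : ℤ) := by
          have h4 : 2 * (2 * u ^ 2 + u * y + 2 * y ^ 2) = 2 * (2 * (p : ℤ)) := by
            linear_combination hk
          linarith
        have heu : Even u := by
          have hev : Even (u * y) := ⟨(p : ℤ) - u ^ 2 - y ^ 2, by linarith⟩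
          rcases Int.even_mul.mp hev with h | h
          · exact h
          · exact absurd h (Int.not_even_iff_odd.mpr hyo)
        obtain ⟨w, rfl⟩ := heu
        refine ⟨y, w, ?_⟩
        have h4 : 4 * (y ^ 2 + y * w + 4 * w ^ 2) = 4 * (p : ℤ) := by linear_combination hk
        linarith
    · rcases Int.even_or_odd y with hye | hyo
      · -- x odd, y even : parity contradiction
        exfalso
        have h4y : Even (4 * y ^ 2) := by
          obtain ⟨t, rfl⟩ := hye; exact ⟨8 * t ^ 2, by ring⟩
        have hodd : Odd (x ^ 2 + x * y + 4 * y ^ 2) :=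
          ((hxo.pow).add_even (hye.mul_left x)).add_even h4y
        rw [hk] at hodd
        exact (Int.not_odd_iff_even.mpr ⟨2 * p, by ring⟩) hodd
      · -- x, y both odd : 4 ∣ x + y
        have hsum : ((x + y : ℤ) : ZMod 4) = 0 := by
          push_cast
          apply zmod4_sum _ _ (odd_sq_zmod4 hxo) (odd_sq_zmod4 hyo)
          have hc := congrArg (fun t : ℤ => (t : ZMod 4)) hk
          push_cast at hc
          have h40 : (4 : ZMod 4) = 0 := by decide
          linear_combination hc + ((p : ℕ) : ZMod 4) * h40
        obtain ⟨c, hc⟩ := (ZMod.intCast_zmod_eq_zero_iff_dvd _ 4).mp hsum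
        have hxc : x = 4 * c - y := by push_cast at hc; linarith
        subst hxc
        refine ⟨-y, c, ?_⟩
        have h4 : 4 * ((-y) ^ 2 + (-y) * c + 4 * c ^ 2) = 4 * (p : ℤ) := by
          linear_combination hk
        linarith
  · -- k = 5 : impossible mod 15
    exfalso
    have key : ((2 * x + y : ℤ) : ZMod 15) ^ 2 = 20 * ((p : ℕ) : ZMod 15) := by
      have hc := congrArg (fun t : ℤ => (t : ZMod 15)) hk
      push_cast at hc ⊢
      linear_combination 4 * hc - ((y : ZMod 15)) ^ 2 * h150
    rcases hP with h | h <;> rw [h] at key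
    · exact (by decide : ∀ s : ZMod 15, s ^ 2 ≠ 20 * 1) _ key
    · exact (by decide : ∀ s : ZMod 15, s ^ 2 ≠ 20 * 4) _ key

/-- A prime `p ≠ 3, 5` is represented by `x² + xy + 4y²` iff
`p ≡ 1, 4 mod 15`. -/
theorem stmt_11 (p : ℕ) (hp : p.Prime) (h3 : p ≠ 3) (h5 : p ≠ 5) :
    (∃ a b : ℤ, a ^ 2 + a * b + 4 * b ^ 2 = (p : ℤ)) ↔
      (p % 15 = 1 ∨ p % 15 = 4) := by
  constructor
  · rintro ⟨a, b, hab⟩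
    have h150 : (15 : ZMod 15) = 0 := by decide
    have key : ((2 * a + b : ℤ) : ZMod 15) ^ 2 = 4 * ((p : ℕ) : ZMod 15) := by
      have hc := congrArg (fun t : ℤ => (t : ZMod 15)) hab
      push_cast at hc ⊢
      linear_combination 4 * hc - ((b : ZMod 15)) ^ 2 * h150
    have hdvd : ¬ p ∣ 15 := by
      intro h
      rcases (Nat.Prime.dvd_mul hp).mp (show p ∣ 3 * 5 from by norm_num at h ⊢; exact h) with
        h' | h'
      · exact h3 ((Nat.prime_dvd_prime_iff_eq hp (by norm_num)).mp h')
      · exact h5 ((Nat.prime_dvd_prime_iff_eq hp (by norm_num)).mp h')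
    have hu : IsUnit ((p : ℕ) : ZMod 15) :=
      (ZMod.isUnit_iff_coprime p 15).mpr ((Nat.Prime.coprime_iff_not_dvd hp).mpr hdvd)
    have h14 := (by decide : ∀ s t : ZMod 15, IsUnit t → s ^ 2 = 4 * t → t = 1 ∨ t = 4)
      _ _ hu key
    rcases h14 with h | h
    · left
      have hv := ZMod.val_natCast (n := 15) p
      rw [h] at hv
      exact hv.symm.trans (by decide)
    · right
      have hv := ZMod.val_natCast (n := 15) p
      rw [h] at hv
      exact hv.symm.trans (by decide)
  · intro h15
    haveI : Fact p.Prime := ⟨hp⟩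
    have hp2 : p ≠ 2 := by rintro rfl; omega
    have hodd : Odd p := hp.odd_of_ne_two hp2
    have hpm2 : p % 2 = 1 := Nat.odd_iff.mp hodd
    -- Jacobi symbol computation
    have hJ : jacobiSym (-15) p = 1 := by
      have hmr := jacobiSym.mod_right (-15 : ℤ) hodd
      norm_num at hmr
      have h60 : p % 60 = 1 ∨ p % 60 = 19 ∨ p % 60 = 31 ∨ p % 60 = 49 := by omega
      rcases h60 with h | h | h | h <;> rw [hmr, h] <;> norm_num
    have hsq : IsSquare (-15 : ZMod p) := by
      have := ZMod.isSquare_of_jacobiSym_eq_one hJ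
      push_cast at this
      exact this
    obtain ⟨c, hc⟩ := hsq
    have h2 : (2 : ZMod p) ≠ 0 := by
      have : ((2 : ℕ) : ZMod p) ≠ 0 := by
        rw [Ne, ZMod.natCast_eq_zero_iff]
        exact fun h => hp2 ((Nat.prime_dvd_prime_iff_eq hp Nat.prime_two).mp h)
      simpa using this
    have h4 : (4 : ZMod p) ≠ 0 := by
      rw [show (4 : ZMod p) = 2 * 2 by norm_num]
      exact mul_ne_zero h2 h2
    set r : ZMod p := (c - 1) * (2 : ZMod p)⁻¹ with hrdef
    have h2r : 2 * r = c - 1 := by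
      rw [hrdef]
      field_simp
    have hr : r ^ 2 + r + 4 = 0 := by
      have key : 4 * (r ^ 2 + r + 4) = 0 := by
        linear_combination (2 * r + c + 1) * h2r - hc
      exact (mul_eq_zero.mp key).resolve_left h4
    exact rep_of_root p hp h15 r hr
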